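/- For x > 0, the standard normal hazard-type ratio satisfies x < φ(x)/Φ(-x) < x + 1/x, where φ is the standard normal density and Φ the standard normal CDF. -/

import Mathlib

open MeasureTheory Real Set Filter

/-- The standard normal density function. -/
noncomputable def stdNormalPDF (x : ℝ) : ℝ :=
  (Real.sqrt (2 * Real.pi))⁻¹ * Real.exp (-x ^ 2 / 2)

/-- The standard normal cumulative distribution function. -/
noncomputable def stdNormalCDF (x : ℝ) : ℝ :=
  ∫ u in Set.Iio x, (Real.sqrt (2 * Real.pi))⁻¹ * Real.exp (-u ^ 2 / 2)

lemma phi_pos (t : ℝ) : 0 < stdNormalPDF t := by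
  unfold stdNormalPDF
  positivity

lemma phi_continuous : Continuous stdNormalPDF := by
  unfold stdNormalPDF
  fun_prop

lemma phi_hasDerivAt (t : ℝ) : HasDerivAt stdNormalPDF (-t * stdNormalPDF t) t := by
  have h1 : HasDerivAt (fun u : ℝ => -u ^ 2 / 2) (-t) t := by
    have h := ((hasDerivAt_pow 2 t).neg).div_const 2
    exact h.congr_deriv (by norm_num; ring)
  have h2 := (Real.hasDerivAt_exp (-t ^ 2 / 2)).comp t h1
  have h3 := h2.const_mul ((Real.sqrt (2 * Real.pi))⁻¹)
  have : HasDerivAt stdNormalPDF ((Real.sqrt (2 * Real.pi))⁻¹ *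
      (Real.exp (-t ^ 2 / 2) * -t)) t := h3
  convert this using 1
  unfold stdNormalPDF
  ring

lemma phi_tendsto : Tendsto stdNormalPDF atTop (nhds 0) := by
  unfold stdNormalPDF
  have h1 : Tendsto (fun t : ℝ => -t ^ 2 / 2) atTop atBot := by
    apply Tendsto.atBot_div_const (by norm_num)
    exact tendsto_neg_atBot_iff.mpr (tendsto_pow_atTop (by norm_num))
  have h2 : Tendsto (fun t : ℝ => Real.exp (-t ^ 2 / 2)) atTop (nhds 0) :=
    Real.tendsto_exp_atBot.comp h1
  have := h2.const_mul ((Real.sqrt (2 * Real.pi))⁻¹)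
  simpa using this

lemma phi_integrable : Integrable stdNormalPDF := by
  have h := integrable_exp_neg_mul_sq (b := 1/2) (by norm_num)
  have h2 : Integrable (fun t : ℝ => Real.exp (-t ^ 2 / 2)) := by
    refine h.congr ?_
    filter_upwards with t
    ring_nf
  exact h2.const_mul _

/-- Gordon's inequality: for `x > 0`, `x < φ(x)/Φ(-x) < x + 1/x`. -/
theorem gordon_mills_ratio (x : ℝ) (hx : 0 < x) :
    x < stdNormalPDF x / stdNormalCDF (-x) ∧
      stdNormalPDF x / stdNormalCDF (-x) < x + 1 / x := by
  set φ := stdNormalPDF with hφ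
  -- rewrite the CDF as an integral over Ioi x
  have hCDF : stdNormalCDF (-x) = ∫ t in Ioi x, φ t := by
    rw [stdNormalCDF, ← integral_Iic_eq_integral_Iio, ← integral_comp_neg_Ioi]
    refine setIntegral_congr_fun measurableSet_Ioi fun t _ => ?_
    simp [hφ, stdNormalPDF, neg_pow]
  set I := ∫ t in Ioi x, φ t with hI
  -- integrability facts
  have hφint : IntegrableOn φ (Ioi x) := phi_integrable.integrableOn
  -- J = ∫ t φ t = φ x
  have hg1 : ∀ t ∈ Ici x, HasDerivAt (fun u => -φ u) (t * φ t) t := by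
    intro t _
    have := (phi_hasDerivAt t).neg
    exact this.congr_deriv (by ring)
  have hg1pos : ∀ t ∈ Ioi x, 0 ≤ t * φ t := fun t ht =>
    mul_nonneg (le_of_lt (hx.trans ht)) (phi_pos t).le
  have hg1lim : Tendsto (fun u => -φ u) atTop (nhds 0) := by
    simpa using phi_tendsto.neg
  have hJint : IntegrableOn (fun t => t * φ t) (Ioi x) :=
    integrableOn_Ioi_deriv_of_nonneg' hg1 hg1pos hg1lim
  have hJ : ∫ t in Ioi x, t * φ t = φ x := by
    have := integral_Ioi_of_hasDerivAt_of_nonneg' hg1 hg1pos hg1lim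
    simpa using this
  -- K = ∫ (1 + t⁻²) φ t = φ x / x
  have hg2 : ∀ t ∈ Ici x, HasDerivAt (fun u => -φ u / u) ((1 + t⁻¹ ^ 2) * φ t) t := by
    intro t ht
    have htpos : 0 < t := lt_of_lt_of_le hx ht
    have hd := ((phi_hasDerivAt t).neg).div (hasDerivAt_id t) (ne_of_gt htpos)
    refine hd.congr_deriv ?_
    simp only [Pi.neg_apply, id, hφ]
    field_simp
    ring
  have hg2pos : ∀ t ∈ Ioi x, 0 ≤ (1 + t⁻¹ ^ 2) * φ t := fun t _ =>
    mul_nonneg (by positivity) (phi_pos t).le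
  have hg2lim : Tendsto (fun u => -φ u / u) atTop (nhds 0) := by
    have h1 : Tendsto (fun u : ℝ => -φ u) atTop (nhds 0) := by simpa using phi_tendsto.neg
    have h2 : Tendsto (fun u : ℝ => u⁻¹) atTop (nhds 0) := tendsto_inv_atTop_zero
    have := h1.mul h2
    simpa [div_eq_mul_inv] using this
  have hKint : IntegrableOn (fun t => (1 + t⁻¹ ^ 2) * φ t) (Ioi x) :=
    integrableOn_Ioi_deriv_of_nonneg' hg2 hg2pos hg2lim
  have hK : ∫ t in Ioi x, (1 + t⁻¹ ^ 2) * φ t = φ x / x := by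
    have := integral_Ioi_of_hasDerivAt_of_nonneg' hg2 hg2pos hg2lim
    simpa [neg_div] using this
  -- a generic strict comparison helper
  have key : ∀ f : ℝ → ℝ, IntegrableOn f (Ioi x) → ContinuousOn f (Ioi x) →
      (∀ t ∈ Ioi x, 0 ≤ f t) → (∀ t ∈ Ioo x (x + 1), 0 < f t) →
      0 < ∫ t in Ioi x, f t := by
    intro f hint hcont hnn hpos
    have hsub : Ioc x (x + 1) ⊆ Ioi x := Ioc_subset_Ioi_self
    have h1 : (∫ t in Ioc x (x + 1), f t) ≤ ∫ t in Ioi x, f t := by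
      apply setIntegral_mono_set hint
      · filter_upwards [ae_restrict_mem measurableSet_Ioi] with t ht using hnn t ht
      · exact HasSubset.Subset.eventuallyLE hsub
    have hii : IntervalIntegrable f volume x (x + 1) := by
      rw [intervalIntegrable_iff_integrableOn_Ioc_of_le (by linarith)]
      exact hint.mono_set hsub
    have h2 : 0 < ∫ t in x..(x + 1), f t :=
      intervalIntegral.intervalIntegral_pos_of_pos_on hii hpos (by linarith)
    rw [intervalIntegral.integral_of_le (by linarith)] at h2
    linarith
  -- I > 0
  have hIpos : 0 < I := by
    apply key φ hφint (phi_continuous.continuousOn)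
      (fun t _ => (phi_pos t).le) (fun t _ => phi_pos t)
  -- first inequality : x * I < φ x
  have h1 : x * I < φ x := by
    have hint : IntegrableOn (fun t => t * φ t - x * φ t) (Ioi x) :=
      hJint.sub (hφint.const_mul x)
    have hd : 0 < ∫ t in Ioi x, (t * φ t - x * φ t) := by
      apply key _ hint
      · exact (continuous_id.mul phi_continuous).continuousOn.sub
          ((continuous_const.mul phi_continuous)).continuousOn
      · intro t ht
        have : x ≤ t := le_of_lt ht
        nlinarith [phi_pos t]
      · intro t ht
        have : x < t := ht.1
        nlinarith [phi_pos t]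
    rw [integral_sub hJint (hφint.const_mul x), hJ, integral_const_mul] at hd
    rw [hI]
    linarith
  -- second inequality : φ x / x < (1 + x⁻¹^2) * I
  have h2 : φ x / x < (1 + x⁻¹ ^ 2) * I := by
    have hd : 0 < ∫ t in Ioi x, ((1 + x⁻¹ ^ 2) * φ t - (1 + t⁻¹ ^ 2) * φ t) := by
      have hint : IntegrableOn (fun t => (1 + x⁻¹ ^ 2) * φ t - (1 + t⁻¹ ^ 2) * φ t) (Ioi x) :=
        (hφint.const_mul _).sub hKint
      apply key _ hint
      · apply ContinuousOn.sub ((continuous_const.mul phi_continuous)).continuousOn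
        apply ContinuousOn.mul
        · apply ContinuousOn.add continuousOn_const
          apply ContinuousOn.pow
          exact ContinuousOn.inv₀ continuousOn_id fun t ht => ne_of_gt (hx.trans ht)
        · exact phi_continuous.continuousOn
      · intro t ht
        have hxt : x < t := ht
        have h3 : t⁻¹ ≤ x⁻¹ := by
          apply inv_anti₀ hx hxt.le
        have h4 : t⁻¹ ^ 2 ≤ x⁻¹ ^ 2 := by
          exact pow_le_pow_left₀ (inv_nonneg.mpr (by linarith)) h3 2
        nlinarith [phi_pos t]
      · intro t ht
        have hxt : x < t := ht.1
        have h3 : t⁻¹ < x⁻¹ := by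
          apply inv_strictAnti₀ hx hxt
        have h4 : t⁻¹ ^ 2 < x⁻¹ ^ 2 := by
          exact pow_lt_pow_left₀ h3 (inv_nonneg.mpr (by linarith)) (by norm_num)
        nlinarith [phi_pos t]
    rw [integral_sub (hφint.const_mul _) hKint, hK, integral_const_mul] at hd
    rw [hI]
    linarith
  rw [hCDF]
  constructor
  · rw [lt_div_iff₀ hIpos]
    linarith
  · rw [div_lt_iff₀ hIpos]
    have : (x + 1 / x) * I = x * ((1 + x⁻¹ ^ 2) * I) := by
      field_simp
    rw [this]
    calc φ x = x * (φ x / x) := by field_simp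
    _ < x * ((1 + x⁻¹ ^ 2) * I) := by
        apply mul_lt_mul_of_pos_left h2 hx
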